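/- Suppose F₂ is atomless conditionally to F₁. Let C ∈ F₂ and let h : Ω → [0, 1] be F₁-measurable. Then there exists a set B ∈ F₂ with B ⊂ C such that E[1_B | F₁] = h · E[1_C | F₁] almost surely. -/

import Mathlib

open MeasureTheory Filter
set_option linter.unusedSectionVars false
set_option linter.unusedVariables false
set_option maxHeartbeats 1000000


/-- `F₂` is atomless conditionally to `F₁`: for every `A ∈ F₂` there is `B ∈ F₂`, `B ⊆ A`,
with `0 < E[1_B | F₁] < E[1_A | F₁]` almost surely on the set `{E[1_A | F₁] > 0}`. -/
def CondAtomless {Ω : Type*} (m1 m2 : MeasurableSpace Ω) (μ : @Measure Ω m2) : Prop :=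
  ∀ A : Set Ω, MeasurableSet[m2] A →
    ∃ B : Set Ω, MeasurableSet[m2] B ∧ B ⊆ A ∧
      ∀ᵐ ω ∂μ, 0 < (μ[A.indicator (fun _ => (1 : ℝ)) | m1]) ω →
        0 < (μ[B.indicator (fun _ => (1 : ℝ)) | m1]) ω ∧
        (μ[B.indicator (fun _ => (1 : ℝ)) | m1]) ω <
          (μ[A.indicator (fun _ => (1 : ℝ)) | m1]) ω

noncomputable def ce {Ω : Type*} (m1 : MeasurableSpace Ω) {m2 : MeasurableSpace Ω}
    (μ : @Measure Ω m2) (X : Set Ω) : Ω → ℝ :=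
  μ[X.indicator (fun _ => (1 : ℝ)) | m1]

section helpers
variable {Ω : Type*} {m1 m2 : MeasurableSpace Ω}
  (μ : @Measure Ω m2) [IsProbabilityMeasure μ]

theorem intInd {X : Set Ω} (hX : MeasurableSet[m2] X) :
    Integrable (X.indicator fun _ => (1 : ℝ)) μ :=
  (integrable_const 1).indicator hX

theorem ce_meas (X : Set Ω) : StronglyMeasurable[m1] (ce m1 μ X) :=
  stronglyMeasurable_condExp

theorem ce_int (X : Set Ω) : Integrable (ce m1 μ X) μ := integrable_condExp

theorem ce_nonneg (X : Set Ω) : 0 ≤ᵐ[μ] ce m1 μ X :=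
  condExp_nonneg (ae_of_all μ fun ω => Set.indicator_nonneg (fun _ _ => zero_le_one) ω)

theorem ce_mono {X Y : Set Ω} (hX : MeasurableSet[m2] X) (hY : MeasurableSet[m2] Y)
    (hXY : X ⊆ Y) : ce m1 μ X ≤ᵐ[μ] ce m1 μ Y :=
  condExp_mono (intInd μ hX) (intInd μ hY)
    (ae_of_all μ fun ω => Set.indicator_le_indicator_of_subset hXY (fun _ => zero_le_one) ω)

theorem ce_add {X Y : Set Ω} (hX : MeasurableSet[m2] X) (hY : MeasurableSet[m2] Y)
    (hd : Disjoint X Y) :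
    ce m1 μ (X ∪ Y) =ᵐ[μ] fun ω => ce m1 μ X ω + ce m1 μ Y ω := by
  have h1 : (X ∪ Y).indicator (fun _ => (1 : ℝ)) =
      (X.indicator fun _ => (1:ℝ)) + (Y.indicator fun _ => (1:ℝ)) :=
    Set.indicator_union_of_disjoint hd _
  calc ce m1 μ (X ∪ Y) = μ[(X.indicator fun _ => (1:ℝ)) + (Y.indicator fun _ => (1:ℝ)) | m1] := by
        rw [ce, h1]
    _ =ᵐ[μ] fun ω => ce m1 μ X ω + ce m1 μ Y ω :=
        condExp_add (intInd μ hX) (intInd μ hY) m1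

theorem ce_diff {X Y : Set Ω} (hX : MeasurableSet[m2] X) (hY : MeasurableSet[m2] Y)
    (hXY : X ⊆ Y) :
    ce m1 μ (Y \ X) =ᵐ[μ] fun ω => ce m1 μ Y ω - ce m1 μ X ω := by
  have h1 : X ∪ (Y \ X) = Y := Set.union_diff_cancel hXY
  have h2 : ce m1 μ (X ∪ (Y \ X)) =ᵐ[μ] fun ω => ce m1 μ X ω + ce m1 μ (Y \ X) ω :=
    ce_add μ hX (hY.diff hX) Set.disjoint_sdiff_right
  rw [h1] at h2
  filter_upwards [h2] with ω hω
  have : ce m1 μ X ω + ce m1 μ (Y \ X) ω = ce m1 μ Y ω := hω.symm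
  linarith

theorem ce_inter_m1 (hm : m1 ≤ m2) {X : Set Ω} (hX : MeasurableSet[m2] X)
    (S : Set Ω) (hS : MeasurableSet[m1] S) :
    ce m1 μ (X ∩ S) =ᵐ[μ] S.indicator (ce m1 μ X) := by
  have h1 : (X ∩ S).indicator (fun _ => (1 : ℝ)) = S.indicator (X.indicator fun _ => (1:ℝ)) := by
    rw [Set.indicator_indicator, Set.inter_comm]
  rw [ce, h1]
  exact condExp_indicator (intInd μ hX) hS

theorem ce_setIntegral (hm : m1 ≤ m2) {X : Set Ω} (hX : MeasurableSet[m2] X)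
    (S : Set Ω) (hS : MeasurableSet[m1] S) :
    ∫ ω in S, ce m1 μ X ω ∂μ = (μ (X ∩ S)).toReal := by
  rw [ce, setIntegral_condExp hm (intInd μ hX) hS]
  rw [setIntegral_indicator hX]
  simp [Set.inter_comm, measureReal_def]

theorem ce_zero_ae {X : Set Ω} (hX0 : μ X = 0) : ce m1 μ X =ᵐ[μ] 0 := by
  have h1 : X.indicator (fun _ => (1:ℝ)) =ᵐ[μ] 0 := by
    have : ∀ᵐ ω ∂μ, ω ∉ X := by
      rw [ae_iff]; simpa using hX0
    filter_upwards [this] with ω hω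
    simp [Set.indicator_of_notMem hω]
  calc ce m1 μ X =ᵐ[μ] μ[(0 : Ω → ℝ)|m1] := condExp_congr_ae h1
    _ = 0 := condExp_zero
    _ =ᵐ[μ] 0 := by rfl

end helpers

section halving
variable {Ω : Type*} {m1 m2 : MeasurableSpace Ω} (hm : m1 ≤ m2)
  (μ : @Measure Ω m2) [IsProbabilityMeasure μ] (hca : CondAtomless m1 m2 μ)
include hm hca

theorem halving {A : Set Ω} (hA : MeasurableSet[m2] A) :
    ∃ B, MeasurableSet[m2] B ∧ B ⊆ A ∧
      ∀ᵐ ω ∂μ, 0 < ce m1 μ A ω → (0 < ce m1 μ B ω ∧ ce m1 μ B ω ≤ ce m1 μ A ω / 2) := by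
  obtain ⟨B₀, hB₀m, hB₀A, hae⟩ := hca A hA
  have hae : ∀ᵐ ω ∂μ, 0 < ce m1 μ A ω → 0 < ce m1 μ B₀ ω ∧ ce m1 μ B₀ ω < ce m1 μ A ω := hae
  set S : Set Ω := {ω | ce m1 μ B₀ ω ≤ ce m1 μ A ω / 2} with hS
  have hSm1 : MeasurableSet[m1] S :=
    measurableSet_le (ce_meas μ B₀).measurable ((ce_meas μ A).measurable.div_const 2)
  refine ⟨(B₀ ∩ S) ∪ ((A \ B₀) ∩ Sᶜ),
    (hB₀m.inter (hm _ hSm1)).union ((hA.diff hB₀m).inter (hm _ hSm1.compl)), ?_, ?_⟩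
  · exact Set.union_subset (Set.inter_subset_left.trans hB₀A)
      (Set.inter_subset_left.trans Set.diff_subset)
  have hdisj : Disjoint (B₀ ∩ S) ((A \ B₀) ∩ Sᶜ) :=
    (disjoint_compl_right (a := S)).mono Set.inter_subset_right Set.inter_subset_right
  have hadd := ce_add (m1 := m1) μ (hB₀m.inter (hm _ hSm1)) ((hA.diff hB₀m).inter (hm _ hSm1.compl)) hdisj
  have h1 := ce_inter_m1 μ hm hB₀m S hSm1
  have h2 := ce_inter_m1 μ hm (hA.diff hB₀m) Sᶜ hSm1.compl
  have h3 := ce_diff (m1 := m1) μ hB₀m hA hB₀A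
  filter_upwards [hadd, h1, h2, h3, hae] with ω e1 e2 e3 e4 e5 hpos
  obtain ⟨hp, hl⟩ := e5 hpos
  rw [e1, e2, e3]
  by_cases hω : ω ∈ S
  · rw [Set.indicator_of_mem hω, Set.indicator_of_notMem (by simp [hω])]
    exact ⟨by linarith [hω.out], by simpa using hω.out⟩
  · rw [Set.indicator_of_notMem hω, Set.indicator_of_mem (by simp [hω]), e4]
    have : ¬ (ce m1 μ B₀ ω ≤ ce m1 μ A ω / 2) := hω
    constructor <;> simp only [zero_add] <;> linarith

theorem small {A : Set Ω} (hA : MeasurableSet[m2] A) (n : ℕ) :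
    ∃ B, MeasurableSet[m2] B ∧ B ⊆ A ∧
      ∀ᵐ ω ∂μ, 0 < ce m1 μ A ω → (0 < ce m1 μ B ω ∧ ce m1 μ B ω ≤ ce m1 μ A ω / 2 ^ n) := by
  induction n with
  | zero => exact ⟨A, hA, subset_rfl, ae_of_all μ fun ω hp => ⟨hp, by simpa using le_rfl⟩⟩
  | succ n ih =>
    obtain ⟨B, hBm, hBA, hB⟩ := ih
    obtain ⟨B', hB'm, hB'B, hB'⟩ := halving hm μ hca hBm
    refine ⟨B', hB'm, hB'B.trans hBA, ?_⟩
    filter_upwards [hB, hB'] with ω e1 e2 hpos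
    obtain ⟨hp1, hl1⟩ := e1 hpos
    obtain ⟨hp2, hl2⟩ := e2 hp1
    refine ⟨hp2, ?_⟩
    rw [pow_succ]
    calc ce m1 μ B' ω ≤ ce m1 μ B ω / 2 := hl2
      _ ≤ ce m1 μ A ω / 2 ^ n / 2 := by linarith
      _ = ce m1 μ A ω / (2 ^ n * 2) := by ring

end halving

section main
variable {Ω : Type*} {m1 m2 : MeasurableSpace Ω} (hm : m1 ≤ m2)
  (μ : @Measure Ω m2) [IsProbabilityMeasure μ]

theorem step_exists {A : Set Ω} (hA : MeasurableSet[m2] A) (f : Ω → ℝ)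
    {X : Set Ω} (hX : MeasurableSet[m2] X) (hXA : X ⊆ A) (hXf : ce m1 μ X ≤ᵐ[μ] f) :
    ∃ Y : Set Ω, MeasurableSet[m2] Y ∧ Y ⊆ A ∧ X ⊆ Y ∧ ce m1 μ Y ≤ᵐ[μ] f ∧
      ∀ B' : Set Ω, (MeasurableSet[m2] B' ∧ B' ⊆ A \ X ∧ ce m1 μ (X ∪ B') ≤ᵐ[μ] f) →
        μ B' ≤ 2 * μ (Y \ X) := by
  set s : ENNReal := ⨆ (B' : Set Ω) (_ : MeasurableSet[m2] B' ∧ B' ⊆ A \ X ∧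
    ce m1 μ (X ∪ B') ≤ᵐ[μ] f), μ B' with hs_def
  have hle_s : ∀ B' : Set Ω, (MeasurableSet[m2] B' ∧ B' ⊆ A \ X ∧
      ce m1 μ (X ∪ B') ≤ᵐ[μ] f) → μ B' ≤ s := fun B' hB' =>
    le_iSup₂ (f := fun (B' : Set Ω) (_ : MeasurableSet[m2] B' ∧ B' ⊆ A \ X ∧
      ce m1 μ (X ∪ B') ≤ᵐ[μ] f) => μ B') B' hB'
  by_cases hs : s = 0
  · refine ⟨X, hX, hXA, subset_rfl, hXf, fun B' hB' => ?_⟩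
    have h1 := hle_s B' hB'
    rw [hs] at h1
    simpa using h1
  · have hstop : s ≠ ⊤ := by
      intro htop
      have : s ≤ 1 := by
        rw [hs_def]
        exact iSup₂_le fun B' _ => prob_le_one
      rw [htop] at this
      exact (by simp : ¬ ((⊤ : ENNReal) ≤ 1)) this
    have hlt : s / 2 < s := ENNReal.half_lt_self hs hstop
    rw [hs_def] at hlt
    rw [lt_iSup_iff] at hlt
    obtain ⟨B', hB'⟩ := hlt
    rw [lt_iSup_iff] at hB'
    obtain ⟨hB'p, hμB'⟩ := hB'
    obtain ⟨hB'm, hB'sub, hB'f⟩ := hB'p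
    have hdXB' : Disjoint X B' := ((Set.disjoint_sdiff_left : Disjoint (A \ X) X).mono_left hB'sub).symm
    refine ⟨X ∪ B', hX.union hB'm, Set.union_subset hXA (hB'sub.trans Set.diff_subset),
      Set.subset_union_left, hB'f, fun B'' hB'' => ?_⟩
    have h1 : μ B'' ≤ s := hle_s B'' hB''
    have h2 : B' ⊆ (X ∪ B') \ X := by
      intro ω hω
      exact ⟨Or.inr hω, fun hX' => hdXB'.ne_of_mem hX' hω rfl⟩
    calc μ B'' ≤ s := h1
      _ = 2 * (s / 2) := by rw [ENNReal.mul_div_cancel' (by norm_num) (by norm_num)]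
      _ ≤ 2 * μ B' := by gcongr
      _ ≤ 2 * μ ((X ∪ B') \ X) := by gcongr

end main

set_option maxHeartbeats 2000000 in
/-- If `F₂` is atomless conditionally to `F₁`, `C ∈ F₂` and `h : Ω → [0,1]` is
`F₁`-measurable, then there is `B ∈ F₂`, `B ⊆ C`, with
`E[1_B | F₁] = h ⋅ E[1_C | F₁]` almost surely. -/
theorem stmt_5 {Ω : Type*} {m1 m2 : MeasurableSpace Ω} (hm : m1 ≤ m2)
    (μ : @Measure Ω m2) [IsProbabilityMeasure μ]
    (hca : CondAtomless m1 m2 μ)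
    (C : Set Ω) (hC : MeasurableSet[m2] C)
    (h : Ω → ℝ) (hmeas : Measurable[m1] h) (hrange : ∀ ω, h ω ∈ Set.Icc (0 : ℝ) 1) :
    ∃ B : Set Ω, MeasurableSet[m2] B ∧ B ⊆ C ∧
      (μ[B.indicator (fun _ => (1 : ℝ)) | m1]) =ᵐ[μ]
        fun ω => h ω * (μ[C.indicator (fun _ => (1 : ℝ)) | m1]) ω := by
  classical
  set f : Ω → ℝ := fun ω => h ω * ce m1 μ C ω with hf_def
  have hf_meas : Measurable[m1] f := hmeas.mul (ce_meas μ C).measurable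
  have hf_int : Integrable f μ := by
    refine Integrable.mono' (ce_int (m1 := m1) μ C).norm
      ((hf_meas.mono hm le_rfl).aestronglyMeasurable) (ae_of_all μ fun ω => ?_)
    simp only [hf_def, Real.norm_eq_abs, abs_mul]
    calc |h ω| * |ce m1 μ C ω| ≤ 1 * |ce m1 μ C ω| := by
          refine mul_le_mul_of_nonneg_right ?_ (abs_nonneg _)
          rw [abs_le]
          exact ⟨by linarith [(hrange ω).1], (hrange ω).2⟩
      _ = ‖ce m1 μ C ω‖ := by rw [one_mul, Real.norm_eq_abs]
  have hf_nonneg : (0 : Ω → ℝ) ≤ᵐ[μ] f := by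
    filter_upwards [ce_nonneg (m1 := m1) μ C] with ω hω
    exact mul_nonneg (hrange ω).1 hω
  have hf_leC : f ≤ᵐ[μ] ce m1 μ C := by
    filter_upwards [ce_nonneg (m1 := m1) μ C] with ω hω
    calc h ω * ce m1 μ C ω ≤ 1 * ce m1 μ C ω := mul_le_mul_of_nonneg_right (hrange ω).2 hω
      _ = ce m1 μ C ω := one_mul _
  choose F hF1 hF2 hF3 hF4 hF5 using fun (X : Set Ω)
    (hX : MeasurableSet[m2] X ∧ X ⊆ C ∧ ce m1 μ X ≤ᵐ[μ] f) =>
    step_exists (m1 := m1) μ hC f hX.1 hX.2.1 hX.2.2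
  have hP0 : MeasurableSet[m2] (∅ : Set Ω) ∧ (∅ : Set Ω) ⊆ C ∧ ce m1 μ (∅ : Set Ω) ≤ᵐ[μ] f := by
    refine ⟨MeasurableSet.empty, Set.empty_subset _, ?_⟩
    filter_upwards [ce_zero_ae (m1 := m1) (μ := μ) (X := ∅) measure_empty, hf_nonneg] with ω h1 h2
    rw [h1]
    exact h2
  let P : Set Ω → Prop := fun X => MeasurableSet[m2] X ∧ X ⊆ C ∧ ce m1 μ X ≤ᵐ[μ] f
  let stepF : {X : Set Ω // P X} → {X : Set Ω // P X} :=
    fun p => ⟨F p.1 p.2, hF1 p.1 p.2, hF2 p.1 p.2, hF4 p.1 p.2⟩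
  let seq : ℕ → {X : Set Ω // P X} := fun n => stepF^[n] ⟨∅, hP0⟩
  have hseq_succ : ∀ n, seq (n + 1) = stepF (seq n) := fun n =>
    Function.iterate_succ_apply' stepF n _
  have hseqP : ∀ n, MeasurableSet[m2] (seq n).1 ∧ (seq n).1 ⊆ C ∧
      ce m1 μ (seq n).1 ≤ᵐ[μ] f := fun n => (seq n).2
  have hstep : ∀ n, (seq (n + 1)).1 = F (seq n).1 (seq n).2 := fun n => by
    rw [hseq_succ n]
  have hmono : ∀ n, (seq n).1 ⊆ (seq (n + 1)).1 := fun n => by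
    rw [hstep n]; exact hF3 _ _
  have hmono' : Monotone fun n => (seq n).1 := monotone_nat_of_le_succ hmono
  set B : Set Ω := ⋃ n, (seq n).1 with hB_def
  have hBm : MeasurableSet[m2] B := MeasurableSet.iUnion fun n => (hseqP n).1
  have hBC : B ⊆ C := Set.iUnion_subset fun n => (hseqP n).2.1
  have hsub : ∀ n, (seq n).1 ⊆ B := fun n => Set.subset_iUnion (fun n => (seq n).1) n
  -- Part 1: ce B ≤ f a.e.
  have key1 : ∀ k : ℕ, μ {ω | f ω + 1 / (k + 1) ≤ ce m1 μ B ω} = 0 := by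
    intro k
    set c : ℝ := 1 / (k + 1) with hc_def
    have hc : 0 < c := by positivity
    set S : Set Ω := {ω | f ω + c ≤ ce m1 μ B ω} with hS_def
    have hSm1 : MeasurableSet[m1] S :=
      measurableSet_le (hf_meas.add_const c) (ce_meas μ B).measurable
    have hIf : IntegrableOn f S μ := hf_int.integrableOn
    have e1 : ∫ ω in S, ce m1 μ B ω ∂μ = (μ (B ∩ S)).toReal := ce_setIntegral μ hm hBm S hSm1
    have e2 : ∀ n, ((μ ((seq n).1 ∩ S)).toReal : ℝ) ≤ ∫ ω in S, f ω ∂μ := by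
      intro n
      rw [← ce_setIntegral μ hm (hseqP n).1 S hSm1]
      exact setIntegral_mono_ae (ce_int (m1 := m1) μ _).integrableOn hIf (hseqP n).2.2
    have e3 : Filter.Tendsto (fun n => (μ ((seq n).1 ∩ S)).toReal) Filter.atTop
        (nhds (μ (B ∩ S)).toReal) := by
      have hmono2 : Monotone fun n => (seq n).1 ∩ S := fun a b hab =>
        Set.inter_subset_inter_left S (hmono' hab)
      have hU : ⋃ n, ((seq n).1 ∩ S) = B ∩ S := by rw [hB_def, Set.iUnion_inter]
      have ht := tendsto_measure_iUnion_atTop (μ := μ) hmono2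
      rw [hU] at ht
      exact (ENNReal.tendsto_toReal (measure_ne_top μ _)).comp ht
    have e4 : (μ (B ∩ S)).toReal ≤ ∫ ω in S, f ω ∂μ :=
      le_of_tendsto e3 (Filter.Eventually.of_forall e2)
    have hIc : IntegrableOn (fun _ => c) S μ :=
      integrableOn_const (measure_ne_top μ S)
    have e5 : ∫ ω in S, f ω ∂μ + (μ S).toReal * c ≤ ∫ ω in S, ce m1 μ B ω ∂μ := by
      have h1 : ∫ ω in S, (f ω + c) ∂μ ≤ ∫ ω in S, ce m1 μ B ω ∂μ := by
        refine setIntegral_mono_on (hIf.add hIc) (ce_int (m1 := m1) μ B).integrableOn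
          (hm _ hSm1) fun ω hω => hω
      rw [integral_add hIf hIc, setIntegral_const, smul_eq_mul, measureReal_def] at h1
      linarith
    have hμS : (μ S).toReal ≤ 0 := by nlinarith [ENNReal.toReal_nonneg (a := μ S)]
    have hμS0 : (μ S).toReal = 0 := le_antisymm hμS ENNReal.toReal_nonneg
    rcases (ENNReal.toReal_eq_zero_iff _).1 hμS0 with h0 | h0
    · exact h0
    · exact absurd h0 (measure_ne_top μ S)
  have hle : ce m1 μ B ≤ᵐ[μ] f := by
    have hall : ∀ᵐ ω ∂μ, ∀ k : ℕ, ¬ (f ω + 1 / (k + 1) ≤ ce m1 μ B ω) := by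
      rw [ae_all_iff]
      intro k
      rw [ae_iff]
      simpa using key1 k
    filter_upwards [hall] with ω hω
    by_contra hlt
    push_neg at hlt
    obtain ⟨k, hk⟩ := exists_nat_one_div_lt (sub_pos.2 hlt)
    exact hω k (by linarith)
  -- Part 2: f ≤ ce B a.e.
  have hge : f ≤ᵐ[μ] ce m1 μ B := by
    set D : Set Ω := {ω | ce m1 μ B ω < f ω} with hD_def
    suffices hD0 : μ D = 0 by
      have hae : ∀ᵐ ω ∂μ, ω ∉ D := by
        rw [ae_iff]
        simpa using hD0
      filter_upwards [hae] with ω hω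
      exact not_lt.1 hω
    by_contra hD
    have hDm1 : MeasurableSet[m1] D := measurableSet_lt (ce_meas μ B).measurable hf_meas
    have hABm : MeasurableSet[m2] (C \ B) := hC.diff hBm
    have hAB : ce m1 μ (C \ B) =ᵐ[μ] fun ω => ce m1 μ C ω - ce m1 μ B ω :=
      ce_diff (m1 := m1) μ hBm hC hBC
    set Dn : ℕ → Set Ω := fun n => {ω | ce m1 μ (C \ B) ω / 2 ^ n ≤ f ω - ce m1 μ B ω}
      with hDn_def
    have hDnm1 : ∀ n, MeasurableSet[m1] (Dn n) := fun n =>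
      measurableSet_le ((ce_meas μ (C \ B)).measurable.div_const _)
        (hf_meas.sub (ce_meas μ B).measurable)
    have hcover : D ⊆ ⋃ n, Dn n := by
      intro ω hω
      have hd : 0 < f ω - ce m1 μ B ω := sub_pos.2 hω
      by_cases ha : ce m1 μ (C \ B) ω ≤ 0
      · refine Set.mem_iUnion.2 ⟨0, ?_⟩
        show ce m1 μ (C \ B) ω / 2 ^ 0 ≤ f ω - ce m1 μ B ω
        simp only [pow_zero, div_one]
        linarith
      · push_neg at ha
        obtain ⟨n, hn⟩ := pow_unbounded_of_one_lt
          (ce m1 μ (C \ B) ω / (f ω - ce m1 μ B ω)) (one_lt_two (α := ℝ))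
        refine Set.mem_iUnion.2 ⟨n, ?_⟩
        show ce m1 μ (C \ B) ω / 2 ^ n ≤ f ω - ce m1 μ B ω
        rw [div_lt_iff₀ hd] at hn
        have h2n : (0 : ℝ) < 2 ^ n := by positivity
        rw [div_le_iff₀ h2n]
        nlinarith
    have hex : ∃ n, μ (D ∩ Dn n) ≠ 0 := by
      by_contra hall
      push_neg at hall
      have h0 : μ (⋃ n, D ∩ Dn n) = 0 := measure_iUnion_null hall
      have hDsub : D ⊆ ⋃ n, (D ∩ Dn n) := fun ω hω => by
        obtain ⟨n, hn⟩ := Set.mem_iUnion.1 (hcover hω)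
        exact Set.mem_iUnion.2 ⟨n, hω, hn⟩
      exact hD (measure_mono_null hDsub h0)
    obtain ⟨n, hSne⟩ := hex
    obtain ⟨B'', hB''m, hB''sub, hB''ae⟩ := small hm μ hca hABm n
    set S : Set Ω := D ∩ Dn n with hS_def
    have hSm1 : MeasurableSet[m1] S := hDm1.inter (hDnm1 n)
    set B3 : Set Ω := B'' ∩ S with hB3_def
    have hB3m : MeasurableSet[m2] B3 := hB''m.inter (hm _ hSm1)
    have h3 : ce m1 μ B3 =ᵐ[μ] S.indicator (ce m1 μ B'') := ce_inter_m1 μ hm hB''m S hSm1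
    have hposS : ∀ᵐ ω ∂μ, ω ∈ S → 0 < ce m1 μ (C \ B) ω := by
      filter_upwards [hAB, hf_leC] with ω h1 h2 hωS
      have hlt : ce m1 μ B ω < f ω := hωS.1
      have h1' : ce m1 μ (C \ B) ω = ce m1 μ C ω - ce m1 μ B ω := h1
      rw [h1']
      linarith
    have hμB3 : μ B3 ≠ 0 := by
      intro h0
      have hz : ce m1 μ B3 =ᵐ[μ] 0 := ce_zero_ae μ h0
      have hae : ∀ᵐ ω ∂μ, ω ∉ S := by
        filter_upwards [h3, hz, hposS, hB''ae] with ω e1 e2 e3 e4 hωS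
        have hpos := (e4 (e3 hωS)).1
        rw [Set.indicator_of_mem hωS] at e1
        have : ce m1 μ B3 ω = (0 : Ω → ℝ) ω := e2
        simp only [Pi.zero_apply] at this
        linarith [e1 ▸ this]
      rw [ae_iff] at hae
      simp only [not_not] at hae
      exact hSne hae
    have hExt : ∀ n', μ B3 ≤ 2 * μ ((seq (n' + 1)).1 \ (seq n').1) := by
      intro n'
      rw [hstep n']
      refine hF5 (seq n').1 (seq n').2 B3 ⟨hB3m, ?_, ?_⟩
      · exact Set.inter_subset_left.trans
          (hB''sub.trans (Set.diff_subset_diff_right (hsub n')))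
      · have hdisj : Disjoint (seq n').1 B3 :=
          (((Set.disjoint_sdiff_left : Disjoint (C \ B) B).mono_left
            (Set.inter_subset_left.trans hB''sub)).mono_right (hsub n')).symm
        have hadd := ce_add (m1 := m1) μ (hseqP n').1 hB3m hdisj
        filter_upwards [hadd, h3, hf_leC, (hseqP n').2.2,
          ce_mono (m1 := m1) μ (hseqP n').1 hBm (hsub n'), hB''ae, hposS]
          with ω e1 e2 e4 e5 e6 e7 e8
        rw [e1]
        show ce m1 μ (seq n').1 ω + ce m1 μ B3 ω ≤ f ω
        by_cases hωS : ω ∈ S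
        · have hpos := e8 hωS
          have hb := e7 hpos
          rw [e2, Set.indicator_of_mem hωS]
          have hDn' : ce m1 μ (C \ B) ω / 2 ^ n ≤ f ω - ce m1 μ B ω := hωS.2
          linarith [hb.2, e6]
        · rw [e2, Set.indicator_of_notMem hωS]
          linarith [e5]
    have hsum : ∀ N : ℕ, (N : ENNReal) * μ B3 ≤ 2 * μ ((seq N).1) := by
      intro N
      induction N with
      | zero => simp
      | succ N ih =>
        have hμ : μ ((seq (N + 1)).1) = μ ((seq N).1) + μ ((seq (N + 1)).1 \ (seq N).1) := by
          rw [← measure_union (Set.disjoint_sdiff_right) ((hseqP (N + 1)).1.diff (hseqP N).1),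
            Set.union_diff_cancel (hmono N)]
        push_cast
        rw [add_mul, one_mul, hμ, mul_add]
        exact add_le_add ih (hExt N)
    have hbound : ∀ N : ℕ, (N : ENNReal) * μ B3 ≤ 2 := fun N =>
      (hsum N).trans ((show 2 * μ ((seq N).1) ≤ 2 * 1 by gcongr; exact prob_le_one).trans_eq (mul_one 2))
    have hfin : μ B3 ≠ ⊤ := measure_ne_top μ _
    obtain ⟨N, hN⟩ := ENNReal.exists_nat_gt (ENNReal.div_lt_top (by norm_num : (2 : ENNReal) ≠ ⊤) hμB3).ne
    have hlt2 : (2 : ENNReal) < N * μ B3 := by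
      rw [← ENNReal.div_lt_iff (Or.inl hμB3) (Or.inl hfin)]
      exact hN
    exact absurd (hbound N) (not_le.2 hlt2)
  refine ⟨B, hBm, hBC, ?_⟩
  show ce m1 μ B =ᵐ[μ] f
  filter_upwards [hle, hge] with ω h1 h2
  exact le_antisymm h1 h2
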